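/- Let (X_j) be i.i.d. real random variables with E[exp(λ₀ X₁)] < ∞ for some λ₀ > 0, let S_n = X₁ + ... + X_n, and let N be a positive integer-valued random variable (not necessarily independent of the X_j) satisfying P[N ≥ k] ≤ q^{k−1} for all k ∈ ℕ, for some q ∈ (0,1). Then there exist constants C, c > 0, depending only on q and the law of X₁, such that P[S_N > α] ≤ C exp(−c α) for every α > 0. -/

import Mathlib

open MeasureTheory Real Filter

set_option maxHeartbeats 1000000 in
/-- If `(X_j)` are i.i.d. real random variables with `E[exp (λ₀ X₁)] < ∞` for some
`λ₀ > 0`, `Sₙ` is the `n`-th partial sum, and `N` is a positive integer-valued random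
variable (not necessarily independent of the `X_j`) with `P[N ≥ k] ≤ q^(k-1)` for all
`k ≥ 1`, where `q ∈ (0,1)`, then there exist `C, c > 0` (depending only on `q` and the
law of `X₁`) with `P[S_N > α] ≤ C exp (-c α)` for every `α > 0`. -/
theorem stopped_sum_exponential_tail {Ω : Type*} [MeasurableSpace Ω] (μ : Measure Ω)
    [IsProbabilityMeasure μ] (X : ℕ → Ω → ℝ) (hmeas : ∀ i, Measurable (X i))
    (hindep : ProbabilityTheory.iIndepFun X μ)
    (hident : ∀ i, ProbabilityTheory.IdentDistrib (X i) (X 0) μ μ)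
    (l₀ : ℝ) (hl₀ : 0 < l₀)
    (hexp : Integrable (fun ω => Real.exp (l₀ * X 0 ω)) μ)
    (N : Ω → ℕ) (hNpos : ∀ ω, 1 ≤ N ω)
    (q : ℝ) (hq0 : 0 < q) (hq1 : q < 1)
    (hNtail : ∀ k : ℕ, 1 ≤ k → μ {ω | k ≤ N ω} ≤ ENNReal.ofReal (q ^ (k - 1))) :
    ∃ C c : ℝ, 0 < C ∧ 0 < c ∧ ∀ α : ℝ, 0 < α →
      μ {ω | α < ∑ j ∈ Finset.range (N ω), X j ω} ≤ ENNReal.ofReal (C * Real.exp (-c * α)) := by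
  classical
  -- integrability of exp (l₀ * X i)
  have hint : ∀ i, Integrable (fun ω => Real.exp (l₀ * X i ω)) μ := by
    intro i
    have h := (hident i).comp (measurable_const_mul l₀ |>.exp)
    exact h.integrable_iff.mpr hexp
  -- the mgf of X i equals that of X 0
  set M : ℝ := ProbabilityTheory.mgf (X 0) μ l₀ with hM
  have hMpos : 0 < M := ProbabilityTheory.mgf_pos hexp
  have hmgf_eq : ∀ i, ProbabilityTheory.mgf (X i) μ l₀ = M := by
    intro i
    exact ((hident i).comp (measurable_const_mul l₀ |>.exp)).integral_eq
  set M₁ : ℝ := max M 1 with hM₁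
  have hM₁ge1 : (1:ℝ) ≤ M₁ := le_max_right _ _
  have hM₁pos : 0 < M₁ := lt_of_lt_of_le one_pos hM₁ge1
  -- Chernoff bound for S_n
  have chernoff : ∀ (n : ℕ) (α : ℝ),
      (μ {ω | α ≤ ∑ j ∈ Finset.range n, X j ω}).toReal ≤ Real.exp (-l₀ * α) * M₁ ^ n := by
    intro n α
    have hintS : Integrable (fun ω => Real.exp (l₀ * (∑ j ∈ Finset.range n, X j) ω)) μ :=
      hindep.integrable_exp_mul_sum hmeas (fun i _ => hint i)
    have h1 := ProbabilityTheory.measure_ge_le_exp_mul_mgf (X := ∑ j ∈ Finset.range n, X j)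
      (μ := μ) (t := l₀) α hl₀.le hintS
    have h2 : ProbabilityTheory.mgf (∑ j ∈ Finset.range n, X j) μ l₀ = M ^ n := by
      rw [hindep.mgf_sum hmeas]
      simp [hmgf_eq]
    have h3 : (μ {ω | α ≤ ∑ j ∈ Finset.range n, X j ω}).toReal
        ≤ Real.exp (-l₀ * α) * M ^ n := by
      have : {ω | α ≤ ∑ j ∈ Finset.range n, X j ω}
          = {ω | α ≤ (∑ j ∈ Finset.range n, X j) ω} := by
        ext ω; simp
      rw [this]
      calc (μ {ω | α ≤ (∑ j ∈ Finset.range n, X j) ω}).toReal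
          ≤ Real.exp (-l₀ * α) * ProbabilityTheory.mgf (∑ j ∈ Finset.range n, X j) μ l₀ := h1
        _ = Real.exp (-l₀ * α) * M ^ n := by rw [h2]
    exact h3.trans (mul_le_mul_of_nonneg_left
      (pow_le_pow_left₀ hMpos.le (le_max_left _ _) n) (Real.exp_pos _).le)
  -- constants
  set L : ℝ := max (Real.log M₁) 1 with hL
  have hLpos : (0:ℝ) < L := lt_of_lt_of_le one_pos (le_max_right _ _)
  set ε : ℝ := l₀ / (2 * L) with hε
  have hεpos : 0 < ε := by rw [hε]; exact div_pos hl₀ (by linarith)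
  have hεL : ε * Real.log M₁ ≤ l₀ / 2 := by
    have h1 : Real.log M₁ ≤ L := le_max_left _ _
    have h2 : ε * Real.log M₁ ≤ ε * L := by
      apply mul_le_mul_of_nonneg_left h1 hεpos.le
    refine h2.trans (le_of_eq ?_)
    have hLne : L ≠ 0 := hLpos.ne'
    rw [hε]
    field_simp
  have hlogq : Real.log q < 0 := Real.log_neg hq0 hq1
  set c₁ : ℝ := ε * (-Real.log q) with hc₁
  have hc₁pos : 0 < c₁ := by
    apply mul_pos hεpos; linarith
  refine ⟨1 + (4 * ε / l₀ + 2) * M₁ ^ 2, min c₁ (l₀ / 4), by positivity,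
    lt_min hc₁pos (by positivity), ?_⟩
  intro α hα
  set c : ℝ := min c₁ (l₀ / 4) with hc
  set n₀ : ℕ := ⌈ε * α⌉₊ + 1 with hn₀
  have hn₀1 : 1 ≤ n₀ := Nat.le_add_left 1 _
  have hn₀ge : ε * α ≤ (n₀ - 1 : ℕ) := by
    simp only [hn₀, Nat.add_sub_cancel]
    exact Nat.le_ceil _
  have hn₀le : (n₀ : ℝ) ≤ ε * α + 2 := by
    have : (⌈ε * α⌉₊ : ℝ) ≤ ε * α + 1 := (Nat.ceil_lt_add_one (by positivity)).le
    push_cast [hn₀]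
    linarith
  -- set inclusion
  have hsub : {ω | α < ∑ j ∈ Finset.range (N ω), X j ω}
      ⊆ {ω | n₀ ≤ N ω} ∪ ⋃ n ∈ Finset.range n₀, {ω | α ≤ ∑ j ∈ Finset.range n, X j ω} := by
    intro ω hω
    by_cases h : n₀ ≤ N ω
    · exact Or.inl h
    · right
      refine Set.mem_biUnion (Finset.mem_range.mpr (not_le.mp h)) ?_
      simp only [Set.mem_setOf_eq] at hω ⊢
      exact hω.le
  calc μ {ω | α < ∑ j ∈ Finset.range (N ω), X j ω}
      ≤ μ ({ω | n₀ ≤ N ω} ∪ ⋃ n ∈ Finset.range n₀, {ω | α ≤ ∑ j ∈ Finset.range n, X j ω}) :=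
        measure_mono hsub
    _ ≤ μ {ω | n₀ ≤ N ω}
        + μ (⋃ n ∈ Finset.range n₀, {ω | α ≤ ∑ j ∈ Finset.range n, X j ω}) :=
        measure_union_le _ _
    _ ≤ ENNReal.ofReal (q ^ (n₀ - 1))
        + ∑ n ∈ Finset.range n₀, μ {ω | α ≤ ∑ j ∈ Finset.range n, X j ω} := by
        gcongr
        · exact hNtail n₀ hn₀1
        · exact measure_biUnion_finset_le _ _
    _ ≤ ENNReal.ofReal (q ^ (n₀ - 1))
        + ∑ n ∈ Finset.range n₀, ENNReal.ofReal (Real.exp (-l₀ * α) * M₁ ^ n₀) := by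
        gcongr with n hn
        have h1 : μ {ω | α ≤ ∑ j ∈ Finset.range n, X j ω}
            = ENNReal.ofReal ((μ {ω | α ≤ ∑ j ∈ Finset.range n, X j ω}).toReal) := by
          rw [ENNReal.ofReal_toReal (measure_ne_top _ _)]
        rw [h1]
        apply ENNReal.ofReal_le_ofReal
        refine (chernoff n α).trans ?_
        gcongr
        · exact le_of_lt (Finset.mem_range.mp hn)
    _ = ENNReal.ofReal (q ^ (n₀ - 1))
        + ENNReal.ofReal ((n₀ : ℝ) * (Real.exp (-l₀ * α) * M₁ ^ n₀)) := by
        rw [Finset.sum_const, Finset.card_range, nsmul_eq_mul,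
          ← ENNReal.ofReal_natCast n₀, ← ENNReal.ofReal_mul (by positivity)]
    _ ≤ ENNReal.ofReal ((1 + (4 * ε / l₀ + 2) * M₁ ^ 2) * Real.exp (-c * α)) := by
        rw [← ENNReal.ofReal_add (by positivity) (by positivity)]
        apply ENNReal.ofReal_le_ofReal
        have hterm1 : q ^ (n₀ - 1) ≤ Real.exp (-c * α) := by
          have h1 : q ^ (n₀ - 1) = Real.exp ((n₀ - 1 : ℕ) * Real.log q) := by
            rw [← Real.log_pow, Real.exp_log (by positivity)]
          rw [h1]
          apply Real.exp_le_exp.mpr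
          have h2 : ((n₀ - 1 : ℕ) : ℝ) * Real.log q ≤ ε * α * Real.log q := by
            apply mul_le_mul_of_nonpos_right hn₀ge hlogq.le
          refine h2.trans ?_
          have h3 : ε * α * Real.log q = -c₁ * α := by rw [hc₁]; ring
          rw [h3]
          have h4 : -c₁ ≤ -c := by
            have : c ≤ c₁ := min_le_left _ _
            linarith
          exact mul_le_mul_of_nonneg_right h4 hα.le
        have hterm2 : (n₀ : ℝ) * (Real.exp (-l₀ * α) * M₁ ^ n₀)
            ≤ (4 * ε / l₀ + 2) * M₁ ^ 2 * Real.exp (-c * α) := by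
          have hMn : (M₁ : ℝ) ^ n₀ = Real.exp ((n₀ : ℝ) * Real.log M₁) := by
            rw [← Real.log_pow, Real.exp_log (by positivity)]
          have hlogM₁ : 0 ≤ Real.log M₁ := Real.log_nonneg hM₁ge1
          have hMn_le : (M₁ : ℝ) ^ n₀ ≤ Real.exp (l₀ / 2 * α) * M₁ ^ 2 := by
            rw [hMn]
            have h4 : (n₀ : ℝ) * Real.log M₁ ≤ (ε * α + 2) * Real.log M₁ :=
              mul_le_mul_of_nonneg_right hn₀le hlogM₁
            have h5 : (ε * α + 2) * Real.log M₁ = ε * Real.log M₁ * α + 2 * Real.log M₁ := by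
              ring
            have h6 : ε * Real.log M₁ * α ≤ l₀ / 2 * α :=
              mul_le_mul_of_nonneg_right hεL hα.le
            have h7 : Real.exp ((n₀:ℝ) * Real.log M₁)
                ≤ Real.exp (l₀ / 2 * α + 2 * Real.log M₁) := by
              apply Real.exp_le_exp.mpr; linarith
            refine h7.trans ?_
            rw [Real.exp_add]
            have : Real.exp (2 * Real.log M₁) = M₁ ^ 2 := by
              rw [mul_comm, Real.exp_mul, Real.exp_log hM₁pos]
              norm_num
            rw [this]
          -- now n₀ * exp(-l₀ α) * M₁^n₀ ≤ (εα + 2) exp(-l₀α/2) M₁²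
          have step1 : (n₀ : ℝ) * (Real.exp (-l₀ * α) * M₁ ^ n₀)
              ≤ (ε * α + 2) * (Real.exp (-l₀ * α) * (Real.exp (l₀ / 2 * α) * M₁ ^ 2)) := by
            apply mul_le_mul hn₀le _ (by positivity) (by positivity)
            exact mul_le_mul_of_nonneg_left hMn_le (by positivity)
          refine step1.trans ?_
          have hexpc : Real.exp (-l₀ * α) * Real.exp (l₀ / 2 * α)
              = Real.exp (-(l₀ / 2) * α) := by
            rw [← Real.exp_add]; ring_nf
          have key : (ε * α + 2) * Real.exp (-(l₀ / 2) * α)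
              ≤ (4 * ε / l₀ + 2) * Real.exp (-c * α) := by
            have hsplit : Real.exp (-(l₀ / 2) * α)
                = Real.exp (-(l₀ / 4) * α) * Real.exp (-(l₀ / 4) * α) := by
              rw [← Real.exp_add]; ring_nf
            have hxe : ∀ x : ℝ, 0 ≤ x → x * Real.exp (-x) ≤ 1 := by
              intro x hx
              have h1 : x ≤ Real.exp x := by
                have := Real.add_one_le_exp x; linarith
              calc x * Real.exp (-x) ≤ Real.exp x * Real.exp (-x) :=
                    mul_le_mul_of_nonneg_right h1 (Real.exp_pos _).le
                _ = 1 := by rw [← Real.exp_add]; simp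
            have hx : ε * α * Real.exp (-(l₀ / 4) * α) ≤ 4 * ε / l₀ := by
              have h1 : (l₀ / 4 * α) * Real.exp (-(l₀ / 4 * α)) ≤ 1 :=
                hxe _ (by positivity)
              have h2 : ε * α * Real.exp (-(l₀ / 4) * α)
                  = (4 * ε / l₀) * ((l₀ / 4 * α) * Real.exp (-(l₀ / 4 * α))) := by
                rw [show -(l₀ / 4) * α = -(l₀ / 4 * α) by ring]
                field_simp
              rw [h2]
              have h3 : (0:ℝ) ≤ 4 * ε / l₀ := by positivity
              nlinarith
            have he1 : Real.exp (-(l₀ / 4) * α) ≤ 1 := by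
              apply Real.exp_le_one_iff.mpr; nlinarith
            have hcle : c ≤ l₀ / 4 := min_le_right _ _
            have hmono : Real.exp (-(l₀ / 4) * α) ≤ Real.exp (-c * α) := by
              apply Real.exp_le_exp.mpr; nlinarith
            calc (ε * α + 2) * Real.exp (-(l₀ / 2) * α)
                = (ε * α * Real.exp (-(l₀ / 4) * α) + 2 * Real.exp (-(l₀ / 4) * α))
                    * Real.exp (-(l₀ / 4) * α) := by rw [hsplit]; ring
              _ ≤ (4 * ε / l₀ + 2) * Real.exp (-(l₀ / 4) * α) := by
                  apply mul_le_mul _ le_rfl (Real.exp_pos _).le (by positivity)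
                  linarith
              _ ≤ (4 * ε / l₀ + 2) * Real.exp (-c * α) :=
                  mul_le_mul_of_nonneg_left hmono (by positivity)
          calc (ε * α + 2) * (Real.exp (-l₀ * α) * (Real.exp (l₀ / 2 * α) * M₁ ^ 2))
              = (ε * α + 2) * Real.exp (-(l₀ / 2) * α) * M₁ ^ 2 := by
                rw [← mul_assoc (Real.exp (-l₀ * α)), hexpc]; ring
            _ ≤ (4 * ε / l₀ + 2) * Real.exp (-c * α) * M₁ ^ 2 := by
                apply mul_le_mul_of_nonneg_right key (by positivity)
            _ = (4 * ε / l₀ + 2) * M₁ ^ 2 * Real.exp (-c * α) := by ring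
        calc q ^ (n₀ - 1) + (n₀ : ℝ) * (Real.exp (-l₀ * α) * M₁ ^ n₀)
            ≤ Real.exp (-c * α) + (4 * ε / l₀ + 2) * M₁ ^ 2 * Real.exp (-c * α) := by
              exact add_le_add hterm1 hterm2
          _ = (1 + (4 * ε / l₀ + 2) * M₁ ^ 2) * Real.exp (-c * α) := by ring
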